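/- arXiv:0907.2960 — 10 statements merged into one kernel-verified Lean document; each statement's English description precedes it below -/
import Mathlib

section
/- Let X be a compact topological space, Y a Hausdorff topological space, D ⊆ X with closure D̄ and ∂D := D̄ \ D. Let f : D̄ → Y be continuous with f(D) open in Y. If E is a connected subset of Y disjoint from f(∂D), then either E ⊆ f(D) or f(D̄) ∩ E = ∅. -/
/-- Dichotomy Principle: X compact, Y Hausdorff, D ⊆ X, f : D̄ → Y continuous
with f(D) open; a connected E disjoint from f(∂D) satisfies E ⊆ f(D) or f(D̄) ∩ E = ∅. -/
theorem dichotomy_principle {X Y : Type*} [TopologicalSpace X] [CompactSpace X]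
    [TopologicalSpace Y] [T2Space Y] (D : Set X) (f : X → Y)
    (hf : ContinuousOn f (closure D)) (hopen : IsOpen (f '' D))
    (E : Set Y) (hE : IsPreconnected E)
    (hdisj : Disjoint E (f '' (closure D \ D))) :
    E ⊆ f '' D ∨ (f '' closure D) ∩ E = ∅ := by
  have hcpt : IsCompact (f '' closure D) :=
    (isClosed_closure.isCompact).image_of_continuousOn hf
  have hclosed : IsClosed (f '' closure D) := hcpt.isClosed
  have hcover : E ⊆ f '' D ∪ (f '' closure D)ᶜ := by
    intro y hy
    by_cases h : y ∈ f '' closure D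
    · left
      obtain ⟨x, hx, rfl⟩ := h
      by_cases hxD : x ∈ D
      · exact ⟨x, hxD, rfl⟩
      · exact absurd (hdisj.ne_of_mem hy ⟨x, ⟨hx, hxD⟩, rfl⟩) (fun h => h rfl)
    · exact Or.inr h
  have hd : Disjoint (f '' D) (f '' closure D)ᶜ :=
    Set.disjoint_compl_right_iff_subset.mpr
      (Set.image_mono (f := f) subset_closure)
  rcases hE.subset_or_subset hopen hclosed.isOpen_compl hd hcover with h | h
  · exact Or.inl h
  · exact Or.inr (by
      ext y
      simp only [Set.mem_inter_iff, Set.mem_empty_iff_false, iff_false]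
      rintro ⟨hy1, hy2⟩
      exact h hy2 hy1)
end

section
/- Let X be a compact topological space, Y a Hausdorff topological space, D ⊆ X with ∂D := D̄ \ D, and f : D̄ → Y continuous with f(D) open. Then f(D̄) is disjoint from the union, over all y ∉ f(D̄), of the connected component E_y of y in Y \ f(∂D). -/
/-- Containment Principle: f(D̄) is disjoint from the union, over y ∉ f(D̄),
of the connected component of y in Y \ f(∂D). -/
theorem containment_principle {X Y : Type*} [TopologicalSpace X] [CompactSpace X]
    [TopologicalSpace Y] [T2Space Y] (D : Set X) (f : X → Y)
    (hf : ContinuousOn f (closure D)) (hopen : IsOpen (f '' D)) :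
    Disjoint (f '' closure D)
      (⋃ y ∈ (f '' closure D)ᶜ, connectedComponentIn (f '' (closure D \ D))ᶜ y) := by
  rw [Set.disjoint_right]
  intro z hz hzF
  simp only [Set.mem_iUnion] at hz
  obtain ⟨y, hy, hzC⟩ := hz
  -- F := f '' closure D is compact, hence closed
  have hFc : IsCompact (f '' closure D) :=
    (isClosed_closure.isCompact).image_of_continuousOn hf
  have hFcl : IsClosed (f '' closure D) := hFc.isClosed
  set W : Set Y := (f '' (closure D \ D))ᶜ with hW
  have hyW : y ∈ W := by
    intro h
    exact hy (Set.image_mono (f := f) (Set.diff_subset) h)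
  set C := connectedComponentIn W y with hC
  have hyC : y ∈ C := mem_connectedComponentIn hyW
  have hCW : C ⊆ W := connectedComponentIn_subset W y
  have hCpre : IsPreconnected C := (isPreconnected_connectedComponentIn)
  -- members of C that lie in f '' closure D lie in f '' D
  have key : ∀ x ∈ C, x ∈ f '' closure D → x ∈ f '' D := by
    intro x hxC hxF
    obtain ⟨a, ha, rfl⟩ := hxF
    by_cases haD : a ∈ D
    · exact ⟨a, haD, rfl⟩
    · exact absurd ⟨a, ⟨ha, haD⟩, rfl⟩ (hCW hxC)
  have := hCpre (f '' D) ((f '' closure D)ᶜ) hopen hFcl.isOpen_compl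
    (by
      intro x hxC
      by_cases hx : x ∈ f '' closure D
      · exact Or.inl (key x hxC hx)
      · exact Or.inr hx)
    ⟨z, hzC, key z hzC hzF⟩
    ⟨y, hyC, hy⟩
  obtain ⟨w, _, hw1, hw2⟩ := this
  exact hw2 (Set.image_mono (f := f) subset_closure hw1)
end

section
/- Let X be compact, Y Hausdorff, D ⊆ X nonempty, ∂D := D̄ \ D, and f : D̄ → Y continuous with f(D) open. If E is a connected subset of Y with f(D) ⊆ E and E ∩ f(∂D) = ∅, then f(D) = E. -/
/-- QJFP part (I): if f(D) ⊆ E, E connected and disjoint from f(∂D), then f(D) = E. -/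
theorem qjfp_I {X Y : Type*} [TopologicalSpace X] [CompactSpace X]
    [TopologicalSpace Y] [T2Space Y] (D : Set X) (hD : D.Nonempty) (f : X → Y)
    (hf : ContinuousOn f (closure D)) (hopen : IsOpen (f '' D))
    (E : Set Y) (hE : IsConnected E)
    (hsub : f '' D ⊆ E) (hdisj : E ∩ f '' (closure D \ D) = ∅) :
    f '' D = E := by
  have hcomp : IsCompact (f '' closure D) :=
    (isClosed_closure.isCompact).image_of_continuousOn hf
  have hclosed : IsClosed (f '' closure D) := hcomp.isClosed
  have hcover : E ⊆ f '' D ∪ (f '' closure D)ᶜ := by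
    intro y hy
    by_cases h : y ∈ f '' closure D
    · obtain ⟨x, hx, rfl⟩ := h
      by_cases hxD : x ∈ D
      · exact Or.inl ⟨x, hxD, rfl⟩
      · exfalso
        have hm : f x ∈ E ∩ f '' (closure D \ D) := ⟨hy, ⟨x, ⟨hx, hxD⟩, rfl⟩⟩
        rw [hdisj] at hm; exact hm
    · exact Or.inr h
  have hdis : Disjoint (f '' D) (f '' closure D)ᶜ := by
    rw [Set.disjoint_compl_right_iff_subset]
    exact Set.image_mono subset_closure
  have hne : (E ∩ f '' D).Nonempty := by
    obtain ⟨x, hx⟩ := hD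
    exact ⟨f x, hsub ⟨x, hx, rfl⟩, ⟨x, hx, rfl⟩⟩
  have := hE.isPreconnected.subset_left_of_subset_union hopen
    hclosed.isOpen_compl hdis hcover hne
  exact Set.Subset.antisymm hsub this
end

section
/- Let X be compact, Y Hausdorff, D ⊆ X nonempty, ∂D := D̄ \ D, and f : D̄ → Y continuous with f(D) open. Suppose E, F ⊆ Y with E connected, E ∩ f(∂D) = ∅, (Y \ f(∂D)) ⊆ E ∪ F, f(D) ∩ F = ∅, and f(∂D) ⊆ closure(F). Then f(D) = E, and moreover f(D) ∩ f(∂D) = ∅. -/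
/-- QJFP part (II). -/
theorem qjfp_II {X Y : Type*} [TopologicalSpace X] [CompactSpace X]
    [TopologicalSpace Y] [T2Space Y] (D : Set X) (hD : D.Nonempty) (f : X → Y)
    (hf : ContinuousOn f (closure D)) (hopen : IsOpen (f '' D))
    (E F : Set Y) (hE : IsConnected E)
    (hEdisj : E ∩ f '' (closure D \ D) = ∅)
    (hcover : (f '' (closure D \ D))ᶜ ⊆ E ∪ F)
    (hFdisj : f '' D ∩ F = ∅)
    (hFcl : f '' (closure D \ D) ⊆ closure F) :
    f '' D = E ∧ f '' D ∩ f '' (closure D \ D) = ∅ := by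
  -- Step 1: f '' D ∩ f '' (∂D) = ∅
  have hdisj : f '' D ∩ f '' (closure D \ D) = ∅ := by
    by_contra h
    obtain ⟨y, hyD, hyB⟩ := Set.nonempty_iff_ne_empty.mpr h
    have hyclF : y ∈ closure F := hFcl hyB
    have : (f '' D ∩ F).Nonempty :=
      mem_closure_iff.mp hyclF _ hopen hyD
    rw [hFdisj] at this
    exact this.ne_empty rfl
  -- Step 2: f '' D ⊆ E
  have hsub : f '' D ⊆ E := by
    intro y hy
    have hyB : y ∉ f '' (closure D \ D) := fun h =>
      (Set.eq_empty_iff_forall_notMem.mp hdisj y) ⟨hy, h⟩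
    rcases hcover hyB with hE' | hF'
    · exact hE'
    · exact absurd ⟨hy, hF'⟩ (Set.eq_empty_iff_forall_notMem.mp hFdisj y)
  -- Step 3: f '' (closure D) is compact, hence closed
  have hKcl : IsClosed (f '' closure D) :=
    ((isClosed_closure.isCompact).image_of_continuousOn hf).isClosed
  -- Step 4: connectedness argument
  have hEsub : E ⊆ f '' D := by
    have h1 : IsOpen (f '' D) := hopen
    have h2 : IsOpen (f '' closure D)ᶜ := hKcl.isOpen_compl
    have hdis : Disjoint (f '' D) (f '' closure D)ᶜ := by
      rw [Set.disjoint_compl_right_iff_subset]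
      exact Set.image_mono (f := f) subset_closure
    have hcov : E ⊆ f '' D ∪ (f '' closure D)ᶜ := by
      intro y hy
      by_cases hyK : y ∈ f '' closure D
      · left
        obtain ⟨x, hx, rfl⟩ := hyK
        by_cases hxD : x ∈ D
        · exact ⟨x, hxD, rfl⟩
        · exact absurd ⟨hy, ⟨x, ⟨hx, hxD⟩, rfl⟩⟩
            (Set.eq_empty_iff_forall_notMem.mp hEdisj _)
      · exact Or.inr hyK
    have hne : (E ∩ f '' D).Nonempty := by
      obtain ⟨x, hx⟩ := hD
      exact ⟨f x, hsub ⟨x, hx, rfl⟩, ⟨x, hx, rfl⟩⟩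
    exact hE.isPreconnected.subset_left_of_subset_union h1 h2 hdis hcov hne
  exact ⟨Set.Subset.antisymm hsub hEsub, hdisj⟩
end

section
/- Let X be compact, Y Hausdorff, D ⊆ X nonempty, ∂D := D̄ \ D, and f : D̄ → Y continuous with f(D) open. Suppose E, F ⊆ Y with E and F connected, Y \ f(∂D) = E ∪ F, F ⊄ f(D), and f(∂D) ⊆ closure(F). Then f(D) = E, E and F are nonempty and disjoint, and f takes no value on D that it takes on ∂D. -/
/-- QJFP part (III). -/
theorem qjfp_III {X Y : Type*} [TopologicalSpace X] [CompactSpace X]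
    [TopologicalSpace Y] [T2Space Y] (D : Set X) (hD : D.Nonempty) (f : X → Y)
    (hf : ContinuousOn f (closure D)) (hopen : IsOpen (f '' D))
    (E F : Set Y) (hE : IsConnected E) (hF : IsConnected F)
    (hcover : (f '' (closure D \ D))ᶜ = E ∪ F)
    (hFnsub : ¬ F ⊆ f '' D)
    (hFcl : f '' (closure D \ D) ⊆ closure F) :
    f '' D = E ∧ E.Nonempty ∧ F.Nonempty ∧ E ∩ F = ∅ ∧
      f '' D ∩ f '' (closure D \ D) = ∅ := by
  set U : Set Y := f '' D with hU
  set B : Set Y := f '' (closure D \ D) with hB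
  set K : Set Y := f '' closure D with hKdef
  have hKcpt : IsCompact K := (isClosed_closure.isCompact).image_of_continuousOn hf
  have hKcl : IsClosed K := hKcpt.isClosed
  have hUK : U ⊆ K := Set.image_mono subset_closure
  have hKsub : K ⊆ U ∪ B := by
    rintro y ⟨x, hx, rfl⟩
    by_cases hxD : x ∈ D
    · exact Or.inl ⟨x, hxD, rfl⟩
    · exact Or.inr ⟨x, ⟨hx, hxD⟩, rfl⟩
  have hFB : ∀ y ∈ F, y ∉ B := by
    intro y hy hyB
    have : y ∈ Bᶜ := by rw [hcover]; exact Or.inr hy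
    exact this hyB
  have hEB : ∀ y ∈ E, y ∉ B := by
    intro y hy hyB
    have : y ∈ Bᶜ := by rw [hcover]; exact Or.inl hy
    exact this hyB
  have hdisj : Disjoint U Kᶜ := by
    rw [Set.disjoint_iff]
    rintro y ⟨hyU, hyKc⟩
    exact hyKc (hUK hyU)
  -- F ⊆ Kᶜ
  have hFcov : F ⊆ U ∪ Kᶜ := by
    intro y hy
    by_cases hyK : y ∈ K
    · rcases hKsub hyK with h | h
      · exact Or.inl h
      · exact absurd h (hFB y hy)
    · exact Or.inr hyK
  have hFK : F ⊆ Kᶜ := by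
    rcases hF.isPreconnected.subset_or_subset hopen hKcl.isOpen_compl hdisj hFcov with h | h
    · exact absurd h hFnsub
    · exact h
  have hUF : ∀ y ∈ U, y ∉ F := fun y hyU hyF => (hFK hyF) (hUK hyU)
  -- U ∩ B = ∅
  have hUB : ∀ y ∈ U, y ∉ B := by
    intro y hyU hyB
    have hyF : y ∈ closure F := hFcl hyB
    rcases (mem_closure_iff.mp hyF) U hopen hyU with ⟨z, hzU, hzF⟩
    exact hUF z hzU hzF
  -- U ⊆ E
  have hUE : U ⊆ E := by
    intro y hy
    have : y ∈ E ∪ F := by rw [← hcover]; exact hUB y hy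
    rcases this with h | h
    · exact h
    · exact absurd h (hUF y hy)
  -- E ⊆ U
  have hUne : U.Nonempty := hD.image f
  have hEcov : E ⊆ U ∪ Kᶜ := by
    intro y hy
    by_cases hyK : y ∈ K
    · rcases hKsub hyK with h | h
      · exact Or.inl h
      · exact absurd h (hEB y hy)
    · exact Or.inr hyK
  have hEU : E ⊆ U := by
    rcases hE.isPreconnected.subset_or_subset hopen hKcl.isOpen_compl hdisj hEcov with h | h
    · exact h
    · obtain ⟨y, hy⟩ := hUne
      exact absurd (hUK hy) (h (hUE hy))
  have hUEeq : U = E := Set.Subset.antisymm hUE hEU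
  refine ⟨hUEeq, hUEeq ▸ hUne, hF.nonempty, ?_, ?_⟩
  · ext y
    simp only [Set.mem_inter_iff, Set.mem_empty_iff_false, iff_false]
    rintro ⟨hyE, hyF⟩
    exact hUF y (hEU hyE) hyF
  · ext y
    simp only [Set.mem_inter_iff, Set.mem_empty_iff_false, iff_false]
    rintro ⟨hyU, hyB⟩
    exact hUB y hyU hyB
end

section
/- Let X be a compact topological space, D ⊆ X, ∂D := D̄ \ D, and f : D̄ → ℂ a continuous map into ℂ (viewed inside the Riemann sphere) with f(D) open. Then f(D̄) is disjoint from the unbounded connected component of ℂ \ f(∂D). -/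
/-- Flight-Confinement Principle: f(D̄) is disjoint from any unbounded connected
component of ℂ \ f(∂D). -/
theorem flight_confinement {X : Type*} [TopologicalSpace X] [CompactSpace X]
    (D : Set X) (f : X → ℂ)
    (hf : ContinuousOn f (closure D)) (hopen : IsOpen (f '' D))
    (w : ℂ) (hw : w ∈ (f '' (closure D \ D))ᶜ)
    (hub : ¬ Bornology.IsBounded (connectedComponentIn (f '' (closure D \ D))ᶜ w)) :
    Disjoint (f '' closure D) (connectedComponentIn (f '' (closure D \ D))ᶜ w) := by
  set E := connectedComponentIn (f '' (closure D \ D))ᶜ w with hE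
  have hK : IsCompact (f '' closure D) :=
    (isClosed_closure.isCompact).image_of_continuousOn hf
  have hEsub : E ⊆ (f '' (closure D \ D))ᶜ := connectedComponentIn_subset _ _
  have hsubD : ∀ x ∈ E ∩ f '' closure D, x ∈ f '' D := by
    rintro x ⟨hxE, y, hy, rfl⟩
    by_cases hyD : y ∈ D
    · exact ⟨y, hyD, rfl⟩
    · exact absurd ⟨y, ⟨hy, hyD⟩, rfl⟩ (hEsub hxE)
  have hpre : IsPreconnected E := isPreconnected_connectedComponentIn
  have hdisj : Disjoint (f '' D) (f '' closure D)ᶜ := by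
    rw [Set.disjoint_compl_right_iff_subset]
    exact Set.image_mono subset_closure
  have hcover : E ⊆ f '' D ∪ (f '' closure D)ᶜ := by
    intro x hx
    by_cases hxK : x ∈ f '' closure D
    · exact Or.inl (hsubD x ⟨hx, hxK⟩)
    · exact Or.inr hxK
  rw [Set.disjoint_right]
  intro x hxE hxK
  have hne : (E ∩ f '' D).Nonempty := ⟨x, hxE, hsubD x ⟨hxE, hxK⟩⟩
  have : E ⊆ f '' D :=
    hpre.subset_left_of_subset_union hopen hK.isClosed.isOpen_compl hdisj hcover hne
  exact hub (hK.isBounded.subset (this.trans (Set.image_mono subset_closure)))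
end

section
/- Let X be a compact topological space, D ⊆ X, ∂D := D̄ \ D, and f : D̄ → ℂ continuous with f(D) open in ℂ. Then sup_{z ∈ D̄} |f(z)| = sup_{z ∈ ∂D} |f(z)|. -/
/-- In an open set of ℂ, every point has a companion of strictly larger modulus. -/
lemma exists_larger_abs {U : Set ℂ} (hU : IsOpen U) {c : ℂ} (hc : c ∈ U) :
    ∃ w ∈ U, ‖c‖ < ‖w‖ := by
  obtain ⟨ε, hε, hball⟩ := Metric.isOpen_iff.mp hU c hc
  rcases eq_or_ne c 0 with h | h
  · refine ⟨((ε/2 : ℝ) : ℂ), hball ?_, ?_⟩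
    · rw [Metric.mem_ball, dist_eq_norm, h, sub_zero, Complex.norm_real,
        Real.norm_eq_abs, abs_of_pos (by linarith)]
      linarith
    · rw [h, norm_zero, Complex.norm_real, Real.norm_eq_abs, abs_of_pos (by linarith)]
      linarith
  · have hcpos : 0 < ‖c‖ := norm_pos_iff.mpr h
    set a := ‖c‖ with ha
    set t : ℝ := (a + ε/2)/a with ht
    have ht1 : t * a = a + ε/2 := div_mul_cancel₀ _ hcpos.ne'
    have htpos : 0 < t := by positivity
    have ht2 : (t - 1) * a = ε/2 := by rw [sub_mul, one_mul, ht1]; ring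
    have ht1' : 1 < t := by nlinarith
    refine ⟨(t : ℂ) * c, hball ?_, ?_⟩
    · rw [Metric.mem_ball, dist_eq_norm]
      have he : (t : ℂ) * c - c = ((t - 1 : ℝ) : ℂ) * c := by push_cast; ring
      rw [he, norm_mul, Complex.norm_real, Real.norm_eq_abs, ← ha,
        abs_of_pos (by linarith), ht2]
      linarith
    · rw [norm_mul, Complex.norm_real, Real.norm_eq_abs, abs_of_pos htpos, ← ha, ht1]
      linarith

/-- Finite maximum modulus principle: sup of |f| on D̄ equals sup of |f| on ∂D. -/
theorem fin_max_mp {X : Type*} [TopologicalSpace X] [CompactSpace X]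
    (D : Set X) (f : X → ℂ)
    (hf : ContinuousOn f (closure D)) (hopen : IsOpen (f '' D))
    (hbd : (closure D \ D).Nonempty) :
    sSup ((fun z => ‖f z‖) '' closure D)
      = sSup ((fun z => ‖f z‖) '' (closure D \ D)) := by
  set g : X → ℝ := fun z => ‖f z‖ with hg
  have hcomp : IsCompact (closure D) := isClosed_closure.isCompact
  have hne : (closure D).Nonempty := ⟨hbd.choose, hbd.choose_spec.1⟩
  have hgcont : ContinuousOn g (closure D) := continuous_norm.comp_continuousOn hf
  obtain ⟨x, hx, hmax⟩ := hcomp.exists_isMaxOn hne hgcont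
  have hmax' : ∀ y ∈ closure D, g y ≤ g x := fun y hy => hmax hy
  have hxb : x ∈ closure D \ D := by
    refine ⟨hx, fun hxD => ?_⟩
    obtain ⟨w, hw, hlt⟩ := exists_larger_abs hopen ⟨x, hxD, rfl⟩
    obtain ⟨y, hyD, rfl⟩ := hw
    exact absurd (hmax' y (subset_closure hyD)) (not_le.mpr hlt)
  have hbdd : BddAbove (g '' closure D) := (hcomp.image_of_continuousOn hgcont).bddAbove
  have hbdd' : BddAbove (g '' (closure D \ D)) :=
    hbdd.mono (Set.image_mono Set.diff_subset)
  have hgx : IsGreatest (g '' closure D) (g x) :=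
    ⟨⟨x, hx, rfl⟩, by rintro _ ⟨y, hy, rfl⟩; exact hmax' y hy⟩
  rw [hgx.csSup_eq]
  apply le_antisymm
  · exact le_csSup hbdd' ⟨x, hxb, rfl⟩
  · exact csSup_le (hbd.image g) (by rintro _ ⟨y, hy, rfl⟩; exact hmax' y hy.1)
end

section
/- Let X be a compact topological space, D ⊆ X, ∂D := D̄ \ D, f : D̄ → ℂ continuous with f(D) open in ℂ, and let m := inf_{z ∈ ∂D} |f(z)|. Then either the open disc {w : |w| < m} is contained in f(D), or |f(z)| ≥ m for all z ∈ D̄. -/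
/-- Minimum modulus dichotomy. -/
theorem min_modulus_dichotomy {X : Type*} [TopologicalSpace X] [CompactSpace X]
    (D : Set X) (f : X → ℂ)
    (hf : ContinuousOn f (closure D)) (hopen : IsOpen (f '' D))
    (m : ℝ) (hm : m = sInf ((fun z => ‖f z‖) '' (closure D \ D))) :
    {w : ℂ | ‖w‖ < m} ⊆ f '' D ∨
      ∀ z ∈ closure D, m ≤ ‖f z‖ := by
  set E : Set ℂ := {w : ℂ | ‖w‖ < m} with hE
  -- m is a lower bound on |f z| for z in the boundary
  have hbd : ∀ z ∈ closure D \ D, m ≤ ‖f z‖ := by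
    intro z hz
    rw [hm]
    exact csInf_le ⟨0, fun x ⟨y, _, hy⟩ => hy ▸ norm_nonneg _⟩
      ⟨z, hz, rfl⟩
  -- f(closure D) is compact, hence closed
  have hclosed : IsClosed (f '' closure D) :=
    (isClosed_closure.isCompact.image_of_continuousOn hf).isClosed
  -- E is preconnected (it's a ball)
  have hEconn : IsPreconnected E := by
    have : E = Metric.ball (0 : ℂ) m := by
      ext w; simp [hE, Complex.dist_eq]
    rw [this]
    exact (convex_ball 0 m).isPreconnected
  -- E ⊆ f(D) ∪ (f(closure D))ᶜ
  have hcover : E ⊆ f '' D ∪ (f '' closure D)ᶜ := by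
    intro w hw
    by_cases h : w ∈ f '' closure D
    · obtain ⟨z, hz, rfl⟩ := h
      by_cases hzD : z ∈ D
      · exact Or.inl ⟨z, hzD, rfl⟩
      · exact absurd hw (not_lt.mpr (hbd z ⟨hz, hzD⟩))
    · exact Or.inr h
  have hdisj : Disjoint (f '' D) (f '' closure D)ᶜ :=
    Set.disjoint_compl_right_iff_subset.mpr
      (Set.image_mono subset_closure)
  rcases hEconn.subset_or_subset hopen hclosed.isOpen_compl hdisj hcover with h | h
  · exact Or.inl h
  · right
    intro z hz
    by_contra hlt
    exact h (Set.mem_setOf.mpr (not_le.mp hlt)) ⟨z, hz, rfl⟩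
end

section
/- Let X be a compact topological space, D ⊆ X, ∂D := D̄ \ D, f : D̄ → ℂ continuous with f(D) open in ℂ, and let M := sup_{z ∈ ∂D} |f(z)| < ∞. Then either every w ∈ ℂ with |w| > M belongs to f(D), or |f(z)| ≤ M for all z ∈ D̄. -/
/-- The exterior of a closed ball of nonnegative radius in `ℂ` is preconnected. -/
lemma isPreconnected_exterior (M : ℝ) (hM : 0 ≤ M) :
    IsPreconnected {w : ℂ | M < ‖w‖} := by
  have h1 : (1 : Cardinal) < Module.rank ℝ ℂ := by
    rw [Complex.rank_real_complex]; norm_num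
  have hsp : IsPreconnected (Metric.sphere (0 : ℂ) 1) := isPreconnected_sphere h1 0 1
  have hprod : IsPreconnected ((Set.Ioi M) ×ˢ (Metric.sphere (0 : ℂ) 1)) :=
    isPreconnected_Ioi.prod hsp
  have himg : (fun p : ℝ × ℂ => p.1 • p.2) '' ((Set.Ioi M) ×ˢ (Metric.sphere (0 : ℂ) 1))
      = {w : ℂ | M < ‖w‖} := by
    ext w
    constructor
    · rintro ⟨⟨r, v⟩, ⟨hr, hv⟩, rfl⟩
      simp only [Set.mem_Ioi] at hr
      have hv' : ‖v‖ = 1 := by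
        simpa [Complex.dist_eq] using Metric.mem_sphere.mp hv
      have : ‖r • v‖ = |r| * ‖v‖ := by
        rw [norm_smul, Real.norm_eq_abs]
      simp only [Set.mem_setOf_eq, this, hv', mul_one]
      rw [abs_of_pos (lt_of_le_of_lt hM hr)]
      exact hr
    · intro hw
      simp only [Set.mem_setOf_eq] at hw
      have hw0 : w ≠ 0 := by
        intro h; rw [h] at hw; simp at hw; exact absurd hw (not_lt.mpr hM)
      have habs : ‖w‖ ≠ 0 := by simpa using hw0
      refine ⟨⟨‖w‖, (‖w‖)⁻¹ • w⟩, ⟨hw, ?_⟩, ?_⟩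
      · simp only [Metric.mem_sphere, Complex.dist_eq, sub_zero]
        rw [norm_smul, Real.norm_eq_abs]
        rw [abs_of_nonneg (inv_nonneg.mpr (norm_nonneg w))]
        field_simp
      · simp only [smul_smul]
        rw [mul_inv_cancel₀ habs, one_smul]
  rw [← himg]
  exact hprod.image _ (Continuous.continuousOn (continuous_fst.smul continuous_snd))

/-- Maximum modulus dichotomy. -/
theorem max_modulus_dichotomy {X : Type*} [TopologicalSpace X] [CompactSpace X]
    (D : Set X) (f : X → ℂ)
    (hf : ContinuousOn f (closure D)) (hopen : IsOpen (f '' D))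
    (M : ℝ) (hM : M = sSup ((fun z => ‖f z‖) '' (closure D \ D))) :
    (∀ w : ℂ, M < ‖w‖ → w ∈ f '' D) ∨
      ∀ z ∈ closure D, ‖f z‖ ≤ M := by
  -- closure D is compact, so f '' closure D is compact
  have hclD : IsCompact (closure D) := isClosed_closure.isCompact
  have hKcpt : IsCompact (f '' closure D) := hclD.image_of_continuousOn hf
  -- the modulus image set is bounded above
  have hbdd : BddAbove ((fun z => ‖f z‖) '' (closure D \ D)) := by
    have : IsCompact ((fun z => ‖f z‖) '' (closure D)) :=
      hclD.image_of_continuousOn (continuous_norm.comp_continuousOn hf)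
    exact this.bddAbove.mono (Set.image_mono (Set.diff_subset))
  -- boundary bound: |f z| ≤ M on closure D \ D
  have hbound : ∀ z ∈ closure D \ D, ‖f z‖ ≤ M := by
    intro z hz
    rw [hM]
    exact le_csSup hbdd ⟨z, hz, rfl⟩
  -- M ≥ 0
  have hM0 : 0 ≤ M := by
    rcases Set.eq_empty_or_nonempty (closure D \ D) with he | ⟨z, hz⟩
    · rw [hM, he, Set.image_empty, Real.sSup_empty]
    · exact le_trans (norm_nonneg (f z)) (hbound z hz)
  set E : Set ℂ := {w : ℂ | M < ‖w‖} with hE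
  have hEpre : IsPreconnected E := isPreconnected_exterior M hM0
  -- two open sets
  have hu : IsOpen (f '' D) := hopen
  have hv : IsOpen ((f '' closure D)ᶜ) := hKcpt.isClosed.isOpen_compl
  have hsub : E ⊆ f '' D ∪ (f '' closure D)ᶜ := by
    intro w hw
    by_cases hwK : w ∈ f '' closure D
    · rcases hwK with ⟨z, hz, rfl⟩
      by_cases hzD : z ∈ D
      · exact Or.inl ⟨z, hzD, rfl⟩
      · exact absurd (hbound z ⟨hz, hzD⟩) (not_le.mpr hw)
    · exact Or.inr hwK
  have hdisj : ¬(E ∩ (f '' D ∩ (f '' closure D)ᶜ)).Nonempty := by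
    rintro ⟨w, _, hw1, hw2⟩
    exact hw2 (Set.image_mono subset_closure hw1)
  by_cases hcase : (E ∩ f '' D).Nonempty
  · by_cases hcase2 : (E ∩ (f '' closure D)ᶜ).Nonempty
    · exact absurd (hEpre _ _ hu hv hsub hcase hcase2) hdisj
    · left
      intro w hw
      have hwE : w ∈ E := hw
      have hwK : w ∈ f '' closure D := by
        by_contra h
        exact hcase2 ⟨w, hwE, h⟩
      rcases hwK with ⟨z, hz, rfl⟩
      by_cases hzD : z ∈ D
      · exact ⟨z, hzD, rfl⟩
      · exact absurd (hbound z ⟨hz, hzD⟩) (not_le.mpr hw)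
  · right
    intro z hz
    by_contra h
    push_neg at h
    have hzE : f z ∈ E := h
    by_cases hzD : z ∈ D
    · exact hcase ⟨f z, hzE, ⟨z, hzD, rfl⟩⟩
    · exact absurd (hbound z ⟨hz, hzD⟩) (not_le.mpr h)
end

section
/- For 1 < p < 2 and z ∈ ℂ with 0 < Re z < π/2 and Im z > 0, the series f(z) = Σ_{k≥0} [(kπ + z)^{-p} − (kπ + π − z)^{-p}] converges absolutely, and Im f(z) < 0. -/
open Real

/-- Imaginary part of `w ^ (-p)` for `w` in the open first quadrant. -/
lemma acp_im_cpow_neg {p : ℝ} (hp0 : 0 < p) (hp2 : p < 2) {w : ℂ}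
    (hre : 0 < w.re) (him : 0 < w.im) : (w ^ (-(p : ℂ))).im < 0 := by
  have hw : w ≠ 0 := by
    intro h; rw [h] at him; simp at him
  have harg0 : 0 < Complex.arg w := by
    rcases lt_or_eq_of_le (Complex.arg_nonneg_iff.2 him.le) with h | h
    · exact h
    · exfalso
      have := Complex.arg_eq_zero_iff.1 h.symm
      exact him.ne' this.2
  have harg1 : Complex.arg w < π / 2 :=
    Complex.arg_lt_pi_div_two_iff.2 (Or.inl hre)
  rw [Complex.cpow_def_of_ne_zero hw, Complex.exp_im]
  have h1 : (Complex.log w * -(p : ℂ)).im = Complex.arg w * (-p) := by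
    simp [Complex.mul_im, Complex.log_im]
  have h2 : Real.sin (Complex.arg w * (-p)) < 0 := by
    apply Real.sin_neg_of_neg_of_neg_pi_lt
    · exact mul_neg_of_pos_of_neg harg0 (by linarith)
    · have : Complex.arg w * p < (π / 2) * 2 := by
        apply mul_lt_mul' harg1.le hp2 hp0.le (by linarith [Real.pi_pos])
      nlinarith
  rw [h1]
  exact mul_neg_of_pos_of_neg (Real.exp_pos _) h2

/-- Imaginary part of `w ^ (-p)` for `w` in the open fourth quadrant. -/
lemma acp_im_cpow_neg' {p : ℝ} (hp0 : 0 < p) (hp2 : p < 2) {w : ℂ}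
    (hre : 0 < w.re) (him : w.im < 0) : 0 < (w ^ (-(p : ℂ))).im := by
  have hw : w ≠ 0 := by
    intro h; rw [h] at him; simp at him
  have harg0 : Complex.arg w < 0 := Complex.arg_neg_iff.2 him
  have harg1 : -(π / 2) < Complex.arg w :=
    Complex.neg_pi_div_two_lt_arg_iff.2 (Or.inl hre)
  rw [Complex.cpow_def_of_ne_zero hw, Complex.exp_im]
  have h1 : (Complex.log w * -(p : ℂ)).im = Complex.arg w * (-p) := by
    simp [Complex.mul_im, Complex.log_im]
  have h2 : 0 < Real.sin (Complex.arg w * (-p)) := by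
    apply Real.sin_pos_of_pos_of_lt_pi
    · exact mul_pos_of_neg_of_neg harg0 (by linarith)
    · nlinarith
  rw [h1]
  exact mul_pos (Real.exp_pos _) h2

open Real in
/-- For 1 < p < 2 and z in the half-strip {0 < Re z < π/2, Im z > 0}, the series
Σ [(kπ+z)^(−p) − (kπ+π−z)^(−p)] converges absolutely and its sum has negative
imaginary part. -/
theorem acp_series (p : ℝ) (hp1 : 1 < p) (hp2 : p < 2) (z : ℂ)
    (hre0 : 0 < z.re) (hre : z.re < π / 2) (him : 0 < z.im) :
    Summable (fun k : ℕ =>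
        ‖((k : ℂ) * π + z) ^ (-(p : ℂ)) - ((k : ℂ) * π + π - z) ^ (-(p : ℂ))‖) ∧
      (∑' k : ℕ,
        (((k : ℂ) * π + z) ^ (-(p : ℂ)) - ((k : ℂ) * π + π - z) ^ (-(p : ℂ)))).im < 0 := by
  have hpi := Real.pi_pos
  set w1 : ℕ → ℂ := fun k => (k : ℂ) * π + z with hw1
  set w2 : ℕ → ℂ := fun k => (k : ℂ) * π + π - z with hw2
  have hw1re : ∀ k : ℕ, (w1 k).re = k * π + z.re := by
    intro k; simp [hw1]
  have hw1im : ∀ k : ℕ, (w1 k).im = z.im := by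
    intro k; simp [hw1]
  have hw2re : ∀ k : ℕ, (w2 k).re = k * π + π - z.re := by
    intro k; simp [hw2]
  have hw2im : ∀ k : ℕ, (w2 k).im = -z.im := by
    intro k; simp [hw2]
  have hw1repos : ∀ k : ℕ, 0 < (w1 k).re := by
    intro k; rw [hw1re]; positivity
  have hw2repos : ∀ k : ℕ, 0 < (w2 k).re := by
    intro k; rw [hw2re]
    have : (0:ℝ) ≤ k * π := by positivity
    linarith
  -- lower bounds on moduli
  have hb1 : ∀ k : ℕ, ((k:ℝ) + 1) * z.re ≤ ‖w1 k‖ := by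
    intro k
    calc ((k:ℝ) + 1) * z.re = k * z.re + z.re := by ring
    _ ≤ k * π + z.re := by nlinarith [Nat.cast_nonneg (α := ℝ) k]
    _ = (w1 k).re := (hw1re k).symm
    _ ≤ ‖w1 k‖ := Complex.re_le_norm _
  have hb2 : ∀ k : ℕ, ((k:ℝ) + 1) * (π/2) ≤ ‖w2 k‖ := by
    intro k
    calc ((k:ℝ) + 1) * (π/2) = k * (π/2) + π/2 := by ring
    _ ≤ k * π + π - z.re := by nlinarith [Nat.cast_nonneg (α := ℝ) k]
    _ = (w2 k).re := (hw2re k).symm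
    _ ≤ ‖w2 k‖ := Complex.re_le_norm _
  have hne1 : ∀ k : ℕ, w1 k ≠ 0 := fun k h => by
    have := hw1repos k; rw [h] at this; simp at this
  have hne2 : ∀ k : ℕ, w2 k ≠ 0 := fun k h => by
    have := hw2repos k; rw [h] at this; simp at this
  have habs1 : ∀ k : ℕ, ‖(w1 k) ^ (-(p:ℂ))‖ = ‖w1 k‖ ^ (-p) := by
    intro k
    rw [Complex.norm_cpow_of_ne_zero (hne1 k)]
    simp
  have habs2 : ∀ k : ℕ, ‖(w2 k) ^ (-(p:ℂ))‖ = ‖w2 k‖ ^ (-p) := by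
    intro k
    rw [Complex.norm_cpow_of_ne_zero (hne2 k)]
    simp
  -- summable majorant
  have hmaj : Summable (fun k : ℕ => (((k:ℝ) + 1) ^ p)⁻¹ * ((z.re ^ (-p)) + (π/2) ^ (-p))) := by
    apply Summable.mul_right
    have h0 : Summable (fun n : ℕ => ((n : ℝ) ^ p)⁻¹) := Real.summable_nat_rpow_inv.2 hp1
    have := (summable_nat_add_iff 1).2 h0
    exact this.congr (fun k => by push_cast; ring_nf)
  have hsum : Summable (fun k : ℕ =>
      ‖(w1 k) ^ (-(p:ℂ)) - (w2 k) ^ (-(p:ℂ))‖) := by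
    apply Summable.of_nonneg_of_le (fun k => norm_nonneg _) _ hmaj
    intro k
    have hk1 : (0:ℝ) < ((k:ℝ) + 1) * z.re := by positivity
    have hk2 : (0:ℝ) < ((k:ℝ) + 1) * (π/2) := by positivity
    have e1 : ‖(w1 k) ^ (-(p:ℂ))‖ ≤ (((k:ℝ) + 1) ^ p)⁻¹ * z.re ^ (-p) := by
      rw [habs1 k]
      calc ‖w1 k‖ ^ (-p) ≤ (((k:ℝ) + 1) * z.re) ^ (-p) :=
            Real.rpow_le_rpow_of_nonpos hk1 (hb1 k) (by linarith)
      _ = (((k:ℝ) + 1)) ^ (-p) * z.re ^ (-p) := Real.mul_rpow (by positivity) hre0.le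
      _ = (((k:ℝ) + 1) ^ p)⁻¹ * z.re ^ (-p) := by
            rw [Real.rpow_neg (by positivity)]
    have e2 : ‖(w2 k) ^ (-(p:ℂ))‖ ≤ (((k:ℝ) + 1) ^ p)⁻¹ * (π/2) ^ (-p) := by
      rw [habs2 k]
      calc ‖w2 k‖ ^ (-p) ≤ (((k:ℝ) + 1) * (π/2)) ^ (-p) :=
            Real.rpow_le_rpow_of_nonpos hk2 (hb2 k) (by linarith)
      _ = (((k:ℝ) + 1)) ^ (-p) * (π/2) ^ (-p) := Real.mul_rpow (by positivity) (by positivity)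
      _ = (((k:ℝ) + 1) ^ p)⁻¹ * (π/2) ^ (-p) := by
            rw [Real.rpow_neg (by positivity)]
    calc ‖(w1 k) ^ (-(p:ℂ)) - (w2 k) ^ (-(p:ℂ))‖
        ≤ ‖(w1 k) ^ (-(p:ℂ))‖ + ‖(w2 k) ^ (-(p:ℂ))‖ :=
          norm_sub_le _ _
      _ ≤ (((k:ℝ) + 1) ^ p)⁻¹ * z.re ^ (-p) + (((k:ℝ) + 1) ^ p)⁻¹ * (π/2) ^ (-p) :=
          add_le_add e1 e2
      _ = (((k:ℝ) + 1) ^ p)⁻¹ * ((z.re ^ (-p)) + (π/2) ^ (-p)) := by ring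
  refine ⟨hsum, ?_⟩
  -- the complex series is summable
  have hsumC : Summable (fun k : ℕ => (w1 k) ^ (-(p:ℂ)) - (w2 k) ^ (-(p:ℂ))) := by
    apply Summable.of_norm
    exact hsum
  -- each term has negative imaginary part
  have hterm : ∀ k : ℕ, ((w1 k) ^ (-(p:ℂ)) - (w2 k) ^ (-(p:ℂ))).im < 0 := by
    intro k
    have h1 : ((w1 k) ^ (-(p:ℂ))).im < 0 :=
      acp_im_cpow_neg (by linarith) hp2 (hw1repos k) (by rw [hw1im]; exact him)
    have h2 : 0 < ((w2 k) ^ (-(p:ℂ))).im :=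
      acp_im_cpow_neg' (by linarith) hp2 (hw2repos k) (by rw [hw2im]; linarith)
    simp [Complex.sub_im]
    linarith
  have him_eq : (∑' k : ℕ, ((w1 k) ^ (-(p:ℂ)) - (w2 k) ^ (-(p:ℂ)))).im
      = ∑' k : ℕ, ((w1 k) ^ (-(p:ℂ)) - (w2 k) ^ (-(p:ℂ))).im :=
    (Complex.hasSum_iff _ _).1 hsumC.hasSum |>.2.tsum_eq.symm
  rw [him_eq]
  have hsumIm : Summable (fun k : ℕ => ((w1 k) ^ (-(p:ℂ)) - (w2 k) ^ (-(p:ℂ))).im) :=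
    ((Complex.hasSum_iff _ _).1 hsumC.hasSum).2.summable
  calc (∑' k : ℕ, ((w1 k) ^ (-(p:ℂ)) - (w2 k) ^ (-(p:ℂ))).im)
      < ∑' _k : ℕ, (0:ℝ) := by
        apply Summable.tsum_lt_tsum (i := 0) (fun k => (hterm k).le) (hterm 0) hsumIm summable_zero
    _ = 0 := tsum_zero
end
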